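/- For a subadditive valuation v, the value (1/n)·MMS(M, v, n) is residual self-feasible: for every 0 ≤ k < n and any k pairwise disjoint bundles each of value less than (1/n)·MMS(M,v,n), the remaining items admit a partition into n−k parts each of value at least (1/n)·MMS(M,v,n). Consequently RMMS(M, v, n) ≥ (1/n)·MMS(M, v, n) for subadditive v. -/

import Mathlib

open Finset

/-- `P` is a partition of the finite set `X` into `n` (possibly empty) parts. -/
def IsPartitionOn {M : Type*} [DecidableEq M] {n : ℕ} (X : Finset M) (P : Fin n → Finset M) : Prop :=
  (∀ i j, i ≠ j → Disjoint (P i) (P j)) ∧ Finset.univ.biUnion P = X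

/-- `t` is residual self-feasible for valuation `v` on the item set `X` with `n` agents:
for every `0 ≤ k < n`, after removing any `k` pairwise disjoint bundles of `X`, each of
`v`-value strictly less than `t`, the remaining items admit an `(n-k)`-partition in which
every part has `v`-value at least `t`. -/
def RSF {M : Type*} [DecidableEq M] {α : Type*} [Preorder α] (v : Finset M → α) (n : ℕ)
    (X : Finset M) (t : α) : Prop :=
  ∀ k, k < n → ∀ B : Fin k → Finset M,
    (∀ i j, i ≠ j → Disjoint (B i) (B j)) → (∀ i, B i ⊆ X) → (∀ i, v (B i) < t) →
    ∃ P : Fin (n - k) → Finset M,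
      (∀ i j, i ≠ j → Disjoint (P i) (P j)) ∧
      Finset.univ.biUnion P = X \ Finset.univ.biUnion B ∧
      ∀ i, t ≤ v (P i)

lemma v_biUnion_le {M ι : Type*} [DecidableEq M] (v : Finset M → NNReal)
    (hzero : v ∅ = 0) (hsub : ∀ S T : Finset M, v (S ∪ T) ≤ v S + v T)
    (s : Finset ι) (B : ι → Finset M) : v (s.biUnion B) ≤ ∑ i ∈ s, v (B i) := by
  classical
  induction s using Finset.induction_on with
  | empty => simp [hzero]
  | insert _ _ ha ih =>
    rw [Finset.biUnion_insert, Finset.sum_insert ha]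
    exact le_trans (hsub _ _) (add_le_add_right ih _)

/-- For a subadditive valuation, `(1/n)·MMS` is residual self-feasible; consequently
`RMMS ≥ (1/n)·MMS`. -/
theorem rmms_ge_mms_div_n_subadditive {M : Type*} [Fintype M] [DecidableEq M]
    (n : ℕ) (hn : 1 ≤ n)
    (v : Finset M → NNReal)
    (hmono : ∀ S T : Finset M, S ⊆ T → v S ≤ v T) (hzero : v ∅ = 0)
    (hsub : ∀ S T : Finset M, v (S ∪ T) ≤ v S + v T)
    (μ : NNReal)
    (hμ : IsGreatest {t : NNReal | ∃ P : Fin n → Finset M,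
        IsPartitionOn Finset.univ P ∧ ∀ j, t ≤ v (P j)} μ) :
    RSF v n (Finset.univ : Finset M) (μ / n) ∧
      ∀ r : NNReal, IsGreatest {t : NNReal | RSF v n (Finset.univ : Finset M) t} r →
        μ / n ≤ r := by
  obtain ⟨⟨Pstar, ⟨hPdisj, hPcover⟩, hPval⟩, _⟩ := hμ
  have hncast : (n : NNReal) ≠ 0 := by
    simp only [ne_eq, Nat.cast_eq_zero]; omega
  have hRSF : RSF v n (Finset.univ : Finset M) (μ / n) := by
    intro k hk B hBdisj hBsub hBval
    set Bset : Finset M := Finset.univ.biUnion B with hBset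
    -- value of removed set
    have hBval' : v Bset ≤ (k : NNReal) * (μ / n) := by
      calc v Bset ≤ ∑ i : Fin k, v (B i) := v_biUnion_le v hzero hsub _ _
        _ ≤ ∑ _i : Fin k, (μ / n) := Finset.sum_le_sum (fun i _ => le_of_lt (hBval i))
        _ = (k : NNReal) * (μ / n) := by
            rw [Finset.sum_const, Finset.card_univ, Fintype.card_fin, nsmul_eq_mul]
    -- every original part, minus the removed set, is still worth ≥ μ/n
    have key : ∀ j : Fin n, μ / n ≤ v (Pstar j \ Bset) := by
      intro j
      have h1 : v (Pstar j) ≤ v (Pstar j \ Bset) + v (Pstar j ∩ Bset) := by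
        have h := hsub (Pstar j \ Bset) (Pstar j ∩ Bset)
        rwa [Finset.sdiff_union_inter] at h
      have h2 : v (Pstar j ∩ Bset) ≤ (k : NNReal) * (μ / n) :=
        le_trans (hmono _ _ Finset.inter_subset_right) hBval'
      have h3 : μ ≤ v (Pstar j \ Bset) + (k : NNReal) * (μ / n) :=
        le_trans (hPval j) (le_trans h1 (add_le_add_right h2 _))
      have h4 : μ / n + (k : NNReal) * (μ / n) ≤ μ := by
        have : ((k : NNReal) + 1) * (μ / n) ≤ (n : NNReal) * (μ / n) := by
          apply mul_le_mul_of_nonneg_right _ (zero_le (a := μ / n))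
          have : (k : ℕ) + 1 ≤ n := hk
          exact_mod_cast this
        calc μ / n + (k : NNReal) * (μ / n) = ((k : NNReal) + 1) * (μ / n) := by ring
          _ ≤ (n : NNReal) * (μ / n) := this
          _ = μ := by
              rw [mul_comm]
              exact div_mul_cancel₀ μ hncast
      exact le_of_add_le_add_right (le_trans h4 h3)
    -- build the (n-k)-partition by merging the first k+1 parts
    have hnk : 0 < n - k := by omega
    let f : Fin n → Fin (n - k) := fun j =>
      if j.val ≤ k then ⟨0, hnk⟩ else ⟨j.val - k, by omega⟩
    let g : Fin (n - k) → Fin n := fun i =>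
      if i.val = 0 then ⟨0, by omega⟩ else ⟨i.val + k, by omega⟩
    have hfg : ∀ i, f (g i) = i := by
      intro i
      apply Fin.ext
      simp only [f, g]
      split <;> split <;> simp_all
    refine ⟨fun i => ((Finset.univ.filter (fun j => f j = i)).biUnion Pstar) \ Bset, ?_, ?_, ?_⟩
    · intro i i' hne
      rw [Finset.disjoint_left]
      rintro x hx hx'
      simp only [Finset.mem_sdiff, Finset.mem_biUnion, Finset.mem_filter, Finset.mem_univ,
        true_and] at hx hx'
      obtain ⟨⟨j, hfj, hxj⟩, -⟩ := hx
      obtain ⟨⟨j', hfj', hxj'⟩, -⟩ := hx'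
      have hjj' : j ≠ j' := by rintro rfl; exact hne (hfj ▸ hfj')
      exact Finset.disjoint_left.mp (hPdisj j j' hjj') hxj hxj'
    · ext x
      simp only [Finset.mem_biUnion, Finset.mem_sdiff, Finset.mem_filter, Finset.mem_univ,
        true_and]
      constructor
      · rintro ⟨i, ⟨j, -, hxj⟩, hxB⟩
        exact hxB
      · intro hxB
        have : x ∈ Finset.univ.biUnion Pstar := hPcover ▸ Finset.mem_univ x
        obtain ⟨j, -, hxj⟩ := Finset.mem_biUnion.mp this
        exact ⟨f j, ⟨j, rfl, hxj⟩, hxB⟩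
    · intro i
      refine le_trans (key (g i)) (hmono _ _ ?_)
      apply Finset.sdiff_subset_sdiff _ (le_refl _)
      intro x hx
      exact Finset.mem_biUnion.mpr ⟨g i, Finset.mem_filter.mpr ⟨Finset.mem_univ _, hfg i⟩, hx⟩
  exact ⟨hRSF, fun r hr => hr.2 hRSF⟩
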